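/- There is no collection B of 30 permutations in S₆, partitioned into 5 blocks of 6, such that: (i) for σ ≠ τ in the same block, σ⁻¹τ has cycle type (3,3) (i.e., is a product of two disjoint 3-cycles), and (ii) for σ, τ in different blocks, σ⁻¹τ has exactly one fixed point, with exactly 450 of these cross-block differences being odd permutations. -/

import Mathlib

open scoped Classical

/-- There is no collection of 30 permutations in `S₆`, arranged in 5 blocks of 6,
such that differences within a block have cycle type `(3,3)`, differences across blocks
have exactly one fixed point, and exactly 450 of the cross-block differences are odd. -/
theorem stmt9 :
    ¬ ∃ B : Fin 5 → Fin 6 → Equiv.Perm (Fin 6),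
      Function.Injective (fun x : Fin 5 × Fin 6 => B x.1 x.2) ∧
      (∀ i j j', j ≠ j' → ((B i j)⁻¹ * B i j').cycleType = {3, 3}) ∧
      (∀ i i' j j', i ≠ i' →
        (Finset.univ.filter (fun x : Fin 6 => ((B i j)⁻¹ * B i' j') x = x)).card = 1) ∧
      (Finset.univ.filter
          (fun x : (Fin 5 × Fin 6) × Fin 5 × Fin 6 =>
            x.1.1 ≠ x.2.1 ∧
              Equiv.Perm.sign ((B x.1.1 x.1.2)⁻¹ * B x.2.1 x.2.2) = -1)).card = 450 := by
  rintro ⟨B, hinj, hblock, hcross, hcount⟩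
  -- all elements of a block have the same sign
  have hsign : ∀ i j, Equiv.Perm.sign (B i j) = Equiv.Perm.sign (B i 0) := by
    intro i j
    by_cases h : j = 0
    · rw [h]
    · have h1 := hblock i 0 j (Ne.symm h)
      have h2 : Equiv.Perm.sign ((B i 0)⁻¹ * B i j) = 1 := by
        rw [Equiv.Perm.sign_of_cycleType, h1]
        decide
      rw [map_mul, map_inv] at h2
      exact (inv_mul_eq_one.mp h2).symm
  set s : Fin 5 → ℤˣ := fun i => Equiv.Perm.sign (B i 0) with hs
  -- the sign of a cross difference depends only on the block indices
  have hkey : ∀ (x : (Fin 5 × Fin 6) × Fin 5 × Fin 6),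
      (x.1.1 ≠ x.2.1 ∧ Equiv.Perm.sign ((B x.1.1 x.1.2)⁻¹ * B x.2.1 x.2.2) = -1)
      ↔ (x.1.1 ≠ x.2.1 ∧ (s x.1.1)⁻¹ * s x.2.1 = -1) := by
    intro x
    rw [map_mul, map_inv, hsign x.1.1 x.1.2, hsign x.2.1 x.2.2]
  -- hence the count is 36 times the number of "odd" pairs of blocks
  have hT : (Finset.univ.filter
          (fun x : (Fin 5 × Fin 6) × Fin 5 × Fin 6 =>
            x.1.1 ≠ x.2.1 ∧
              Equiv.Perm.sign ((B x.1.1 x.1.2)⁻¹ * B x.2.1 x.2.2) = -1)).card =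
      ((Finset.univ.filter
          (fun p : Fin 5 × Fin 5 => p.1 ≠ p.2 ∧ (s p.1)⁻¹ * s p.2 = -1)) ×ˢ
        (Finset.univ : Finset (Fin 6 × Fin 6))).card := by
    apply Finset.card_nbij'
      (i := fun x : (Fin 5 × Fin 6) × Fin 5 × Fin 6 => ((x.1.1, x.2.1), (x.1.2, x.2.2)))
      (j := fun y : (Fin 5 × Fin 5) × Fin 6 × Fin 6 => ((y.1.1, y.2.1), (y.1.2, y.2.2)))
    · intro a ha
      simp only [Finset.mem_coe, Finset.mem_filter, Finset.mem_univ, true_and] at ha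
      simp only [Finset.mem_coe, Finset.mem_product, Finset.mem_filter, Finset.mem_univ, true_and, and_true]
      exact (hkey a).mp ha
    · intro a ha
      simp only [Finset.mem_coe, Finset.mem_product, Finset.mem_filter, Finset.mem_univ, true_and, and_true] at ha
      simp only [Finset.mem_coe, Finset.mem_filter, Finset.mem_univ, true_and]
      exact (hkey ((a.1.1, a.2.1), (a.1.2, a.2.2))).mpr ha
    · intro a _; rfl
    · intro a _; rfl
  rw [hcount, Finset.card_product] at hT
  have h36 : (Finset.univ : Finset (Fin 6 × Fin 6)).card = 36 := by decide
  rw [h36] at hT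
  omega
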